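/- Let P be an element of the Laurent polynomial ring ℛ such that P = z^u · \overline{P} for some vector u ∈ ℤ^s, where z^u denotes the monomial z_1^{u_1}···z_s^{u_s}. Then either (i) u = 2w for some w ∈ ℤ^s and P = z^w · Q for some Q ∈ ℛ with Q = \overline{Q}, or (ii) there exists Q ∈ ℛ such that P = Q + z^u · \overline{Q} and P does not divide Q in ℛ. -/

import Mathlib

open Complex

noncomputable section

/-- Exponents of Laurent monomials: a nonnegative exponent for `x`,
integer exponents for the `y`- and `z`-variables. -/
abbrev LaurentExp (r s : ℕ) : Type := ℕ × (Fin r → ℤ) × (Fin s → ℤ)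

/-- The ring ℛ = K[x, y₁, y₁⁻¹, …, y_r, y_r⁻¹, z₁, z₁⁻¹, …, z_s, z_s⁻¹]
of Laurent polynomials over a subfield K of ℂ. -/
abbrev LaurentRing (K : Subfield ℂ) (r s : ℕ) : Type :=
  AddMonoidAlgebra K (LaurentExp r s)

/-- Conjugation automorphism on the Laurent ring: conjugate the coefficients and
negate the exponents of the `z`-variables. -/
def lconj (K : Subfield ℂ) (hK : ∀ z ∈ K, (starRingEnd ℂ) z ∈ K) (r s : ℕ)
    (P : LaurentRing K r s) : LaurentRing K r s :=
  Finsupp.sum P.coeff fun e c =>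
    AddMonoidAlgebra.single (e.1, e.2.1, -e.2.2) (⟨(starRingEnd ℂ) (c : ℂ), hK _ c.2⟩ : K)

/-- The monomial z^u = z₁^{u₁} ⋯ z_s^{u_s}. -/
def zmon (K : Subfield ℂ) (r s : ℕ) (u : Fin s → ℤ) : LaurentRing K r s :=
  AddMonoidAlgebra.single ((0 : ℕ), (0 : Fin r → ℤ), u) 1

/-- Evaluation of P ∈ ℛ at x = t, y_j = e^{a_j t}, z_j = e^{i b_j t}. -/
def leval (K : Subfield ℂ) (r s : ℕ) (a : Fin r → ℝ) (b : Fin s → ℝ)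
    (P : LaurentRing K r s) (t : ℝ) : ℂ :=
  Finsupp.sum P.coeff fun e c =>
    (c : ℂ) * (t : ℂ) ^ e.1 *
      (∏ j, Complex.exp ((a j : ℂ) * t) ^ (e.2.1 j)) *
      (∏ j, Complex.exp (Complex.I * (b j : ℂ) * t) ^ (e.2.2 j))

/-- Schanuel's Conjecture: if a₁,…,aₙ are complex numbers linearly independent over ℚ,
then the field ℚ(a₁,…,aₙ, e^{a₁},…,e^{aₙ}) has transcendence degree at least n over ℚ,
i.e. it contains n algebraically independent elements. -/
def SchanuelConjecture : Prop :=
  ∀ (n : ℕ) (a : Fin n → ℂ), LinearIndependent ℚ a →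
    ∃ g : Fin n → ℂ,
      (∀ i, g i ∈ IntermediateField.adjoin ℚ
        (Set.range a ∪ Set.range fun i => Complex.exp (a i))) ∧
      AlgebraicIndependent ℚ g

namespace LCDaux

variable {K : Subfield ℂ} (hK : ∀ z ∈ K, (starRingEnd ℂ) z ∈ K) {r s : ℕ}

/-- star as a ring hom on K -/
def cstar (K : Subfield ℂ) (hK : ∀ z ∈ K, (starRingEnd ℂ) z ∈ K) : K →+* K where
  toFun c := ⟨(starRingEnd ℂ) (c : ℂ), hK _ c.2⟩
  map_one' := by ext; simp
  map_mul' a b := by ext; simp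
  map_zero' := by ext; simp
  map_add' a b := by ext; simp

@[simp] lemma cstar_cstar (c : K) : cstar K hK (cstar K hK c) = c := by
  ext; simp [cstar]

@[simp] lemma cstar_eq_zero_iff (c : K) : cstar K hK c = 0 ↔ c = 0 := by
  constructor
  · intro h
    have := congrArg (cstar K hK) h
    rwa [cstar_cstar, map_zero] at this
  · rintro rfl; exact map_zero _

lemma lconj_apply (X : LaurentRing K r s) (e : LaurentExp r s) :
    (lconj K hK r s X).coeff e = cstar K hK (X.coeff (e.1, e.2.1, -e.2.2)) := by
  classical
  rw [lconj, AddMonoidAlgebra.coeff_finsuppSum, Finsupp.sum_apply, Finsupp.sum]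
  rw [Finset.sum_eq_single ((e.1, e.2.1, -e.2.2) : LaurentExp r s)]
  · simp [AddMonoidAlgebra.coeff_single, Finsupp.single_apply, Prod.ext_iff, cstar]
  · intro b hb hne
    rw [AddMonoidAlgebra.coeff_single, Finsupp.single_apply, if_neg]
    intro h
    apply hne
    obtain ⟨h1, h2, h3⟩ := Prod.ext_iff.1 h |>.imp id (Prod.ext_iff.1 ·)
    exact Prod.ext h1 (Prod.ext h2 (by rw [← h3, neg_neg]))
  · intro h
    rw [Finsupp.notMem_support_iff] at h
    simp [h, cstar]
    rfl

/-- multiply by the monomial z^t : coefficient formula -/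
lemma zmon_mul_apply (t : Fin s → ℤ) (X : LaurentRing K r s) (e : LaurentExp r s) :
    (zmon K r s t * X).coeff e = X.coeff (e.1, e.2.1, e.2.2 - t) := by
  rw [zmon, AddMonoidAlgebra.coeff_single_mul_eq_mul_coeff (e.1, e.2.1, e.2.2 - t), one_mul]
  intro a _
  obtain ⟨a1, a2, a3⟩ := a
  obtain ⟨e1, e2, e3⟩ := e
  simp only [Prod.mk_add_mk, Prod.mk.injEq, zero_add]
  constructor
  · rintro ⟨h1, h2, h3⟩
    exact ⟨h1, h2, by rw [← h3]; abel⟩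
  · rintro ⟨h1, h2, h3⟩
    exact ⟨h1, h2, by rw [h3]; abel⟩

lemma zmul_lconj_apply (t : Fin s → ℤ) (X : LaurentRing K r s) (e : LaurentExp r s) :
    (zmon K r s t * lconj K hK r s X).coeff e = cstar K hK (X.coeff (e.1, e.2.1, t - e.2.2)) := by
  rw [zmon_mul_apply, lconj_apply, neg_sub]

lemma zmon_mul_zmon (t t' : Fin s → ℤ) :
    zmon K r s t * zmon K r s t' = zmon K r s (t + t') := by
  rw [zmon, zmon, zmon, AddMonoidAlgebra.single_mul_single, one_mul]
  congr 1

lemma zmon_zero : zmon K r s 0 = 1 := rfl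

/-- The conjugation-shift involution on exponents. -/
def sigma (u : Fin s → ℤ) (e : LaurentExp r s) : LaurentExp r s := (e.1, e.2.1, u - e.2.2)

@[simp] lemma sigma_sigma (u : Fin s → ℤ) (e : LaurentExp r s) :
    sigma u (sigma u e) = e := by
  simp [sigma]

/-- Embedding of exponents into ℕ →₀ ℤ. -/
def rawF (r s : ℕ) (e : LaurentExp r s) : ℕ →₀ ℤ :=
  Finsupp.single 0 (e.1 : ℤ) + (∑ i : Fin r, Finsupp.single (1 + (i : ℕ)) (e.2.1 i)) +
    ∑ j : Fin s, Finsupp.single (1 + r + (j : ℕ)) (e.2.2 j)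

lemma rawF_add (a b : LaurentExp r s) : rawF r s (a + b) = rawF r s a + rawF r s b := by
  simp only [rawF, Prod.fst_add, Prod.snd_add, Pi.add_apply, Nat.cast_add,
    Finsupp.single_add, Finset.sum_add_distrib]
  abel

lemma rawF_apply_x (e : LaurentExp r s) : rawF r s e 0 = (e.1 : ℤ) := by
  simp [rawF, Finsupp.single_apply]

lemma rawF_apply_y (e : LaurentExp r s) (i : Fin r) : rawF r s e (1 + (i : ℕ)) = e.2.1 i := by
  simp only [rawF, Finsupp.add_apply, Finsupp.finset_sum_apply, Finsupp.single_apply]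
  rw [if_neg (by omega)]
  rw [Finset.sum_eq_single i (fun b _ hb => by
      rw [if_neg (by simpa [Fin.val_inj] using (by omega : ¬ (b : ℕ) = (i : ℕ)))])
    (by simp), if_pos rfl]
  rw [Finset.sum_eq_zero (fun j _ => by rw [if_neg (by omega)])]
  ring

lemma rawF_apply_z (e : LaurentExp r s) (j : Fin s) :
    rawF r s e (1 + r + (j : ℕ)) = e.2.2 j := by
  simp only [rawF, Finsupp.add_apply, Finsupp.finset_sum_apply, Finsupp.single_apply]
  rw [if_neg (by omega)]
  rw [Finset.sum_eq_zero (fun i _ => by rw [if_neg (by have := i.2; omega)])]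
  rw [Finset.sum_eq_single j (fun b _ hb => by
      rw [if_neg (by simpa [Fin.val_inj] using (by omega : ¬ (b : ℕ) = (j : ℕ)))])
    (by simp), if_pos rfl]
  ring

lemma rawF_injective : Function.Injective (rawF r s) := by
  intro a b h
  refine Prod.ext ?_ (Prod.ext ?_ ?_)
  · have := congrArg (fun f => f 0) h
    simp only [rawF_apply_x] at this
    exact_mod_cast this
  · funext i
    have := congrArg (fun f => f (1 + (i : ℕ))) h
    simpa only [rawF_apply_y] using this
  · funext j
    have := congrArg (fun f => f (1 + r + (j : ℕ))) h
    simpa only [rawF_apply_z] using this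

/-- Lexicographic degree map. -/
def lexF (r s : ℕ) (e : LaurentExp r s) : Lex (ℕ →₀ ℤ) := toLex (rawF r s e)

lemma lexF_add (a b : LaurentExp r s) : lexF r s (a + b) = lexF r s a + lexF r s b := by
  simp only [lexF, rawF_add]
  rfl

lemma lexF_injective : Function.Injective (lexF r s) :=
  fun a b h => rawF_injective (toLex.injective h)

lemma fsum_zero {β M N : Type*} [Zero M] [AddCommMonoid N] (f : β →₀ M) (g : β → M → N)
    (h : ∀ x ∈ f.support, g x (f x) = 0) : f.sum g = 0 :=
  Finset.sum_eq_zero h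

lemma lexF_zero : lexF r s 0 = 0 := by
  simp only [lexF, rawF]
  norm_num

/-- Coefficient of a product at a "uniquely decomposable" exponent. -/
lemma mul_apply_unique (A B : LaurentRing K r s) (a b : LaurentExp r s)
    (h : ∀ x ∈ A.coeff.support, ∀ y ∈ B.coeff.support, x + y = a + b → x = a ∧ y = b) :
    (A * B).coeff (a + b) = A.coeff a * B.coeff b := by
  classical
  by_cases ha : a ∈ A.coeff.support
  · by_cases hb : b ∈ B.coeff.support
    · rw [AddMonoidAlgebra.coeff_mul, Finsupp.sum]
      rw [Finset.sum_eq_single a (fun x hx hxa => fsum_zero _ _ (fun y hy => by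
          rw [if_neg (fun hxy => hxa (h x hx y hy hxy).1)]))
        (fun hx => absurd ha hx)]
      rw [Finsupp.sum]
      rw [Finset.sum_eq_single b (fun y hy hyb => by
          rw [if_neg (fun hxy => hyb (h a ha y hy hxy).2)])
        (fun hy => absurd hb hy)]
      rw [if_pos rfl]
    · rw [Finsupp.notMem_support_iff.1 hb, mul_zero]
      rw [AddMonoidAlgebra.coeff_mul]
      refine fsum_zero _ _ (fun x hx => fsum_zero _ _ (fun y hy => ?_))
      rw [if_neg (fun hxy => hb ((h x hx y hy hxy).2 ▸ hy))]
  · rw [Finsupp.notMem_support_iff.1 ha, zero_mul]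
    rw [AddMonoidAlgebra.coeff_mul]
    refine fsum_zero _ _ (fun x hx => fsum_zero _ _ (fun y hy => ?_))
    rw [if_neg (fun hxy => ha ((h x hx y hy hxy).1 ▸ hx))]

lemma zmul_lconj_apply' (t : Fin s → ℤ) (X : LaurentRing K r s) (e : LaurentExp r s) :
    (zmon K r s t * lconj K hK r s X).coeff e = cstar K hK (X.coeff (sigma t e)) :=
  zmul_lconj_apply hK t X e

lemma lconj_single (a : LaurentExp r s) (c : K) :
    lconj K hK r s (AddMonoidAlgebra.single a c) =
      AddMonoidAlgebra.single ((a.1, a.2.1, -a.2.2) : LaurentExp r s) (cstar K hK c) := by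
  apply AddMonoidAlgebra.ext
  apply Finsupp.ext
  intro e
  rw [lconj_apply]
  rw [AddMonoidAlgebra.coeff_single, AddMonoidAlgebra.coeff_single, Finsupp.single_apply, Finsupp.single_apply, apply_ite (cstar K hK), map_zero]
  refine if_congr ?_ rfl rfl
  obtain ⟨n, m, v⟩ := e
  obtain ⟨n', m', v'⟩ := a
  simp only [Prod.mk.injEq]
  constructor
  · rintro ⟨h1, h2, h3⟩
    exact ⟨h1, h2, by rw [h3, neg_neg]⟩
  · rintro ⟨h1, h2, h3⟩
    exact ⟨h1, h2, by rw [← h3, neg_neg]⟩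

lemma lconj_sub (A B : LaurentRing K r s) :
    lconj K hK r s (A - B) = lconj K hK r s A - lconj K hK r s B := by
  apply AddMonoidAlgebra.ext
  apply Finsupp.ext
  intro e
  rw [AddMonoidAlgebra.coeff_sub, Finsupp.sub_apply, lconj_apply, lconj_apply, lconj_apply, AddMonoidAlgebra.coeff_sub, Finsupp.sub_apply, map_sub]

lemma lconj_one : lconj K hK r s 1 = 1 := by
  rw [AddMonoidAlgebra.one_def, lconj_single, map_one]
  congr 1

lemma lconj_zmon (t : Fin s → ℤ) : lconj K hK r s (zmon K r s t) = zmon K r s (-t) := by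
  rw [zmon, lconj_single, map_one, zmon]

end LCDaux

/-- Proposition 1: if P = z^u · conj(P), then either u = 2w and P = z^w · Q with Q = conj(Q),
or P = Q + z^u · conj(Q) for some Q not divisible by P. -/
theorem laurent_conj_associate_dichotomy
    (K : Subfield ℂ) [FiniteDimensional ℚ K]
    (hK : ∀ z ∈ K, (starRingEnd ℂ) z ∈ K) (r s : ℕ)
    (P : LaurentRing K r s) (u : Fin s → ℤ)
    (hP : P = zmon K r s u * lconj K hK r s P) :
    (∃ w : Fin s → ℤ, u = 2 • w ∧
      ∃ Q : LaurentRing K r s, P = zmon K r s w * Q ∧ lconj K hK r s Q = Q) ∨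
    (∃ Q : LaurentRing K r s,
      P = Q + zmon K r s u * lconj K hK r s Q ∧ ¬ P ∣ Q) := by
  classical
  have hrel : ∀ e : LaurentExp r s, P.coeff e = LCDaux.cstar K hK (P.coeff (LCDaux.sigma u e)) := by
    intro e
    conv_lhs => rw [hP]
    exact LCDaux.zmul_lconj_apply' hK u P e
  by_cases hw : ∃ w : Fin s → ℤ, u = 2 • w
  · left
    obtain ⟨w, hu⟩ := hw
    refine ⟨w, hu, zmon K r s (-w) * P, ?_, ?_⟩
    · rw [← mul_assoc, LCDaux.zmon_mul_zmon, add_neg_cancel, LCDaux.zmon_zero, one_mul]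
    · apply AddMonoidAlgebra.ext
      apply Finsupp.ext
      intro e
      obtain ⟨n, m, v⟩ := e
      simp only [LCDaux.lconj_apply, LCDaux.zmon_mul_apply]
      rw [hrel (n, m, v - -w)]
      simp only [LCDaux.sigma]
      have h3 : -v - -w = u - (v - -w) := by rw [hu, two_smul]; abel
      rw [h3]
  · right
    have hu0 : u ≠ 0 := by
      intro h
      exact hw ⟨0, by rw [h, smul_zero]⟩
    by_cases hP0 : P = 0
    · refine ⟨1 - zmon K r s u, ?_, ?_⟩
      · rw [LCDaux.lconj_sub hK, LCDaux.lconj_one hK, LCDaux.lconj_zmon hK, mul_sub, mul_one,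
          LCDaux.zmon_mul_zmon, add_neg_cancel, LCDaux.zmon_zero, hP0]
        ring
      · rw [hP0, zero_dvd_iff]
        intro h
        rw [sub_eq_zero] at h
        have h0 := congrArg (fun f : LaurentRing K r s => f.coeff 0) h
        simp only [AddMonoidAlgebra.one_def, zmon, AddMonoidAlgebra.coeff_single] at h0
        rw [Finsupp.single_apply, Finsupp.single_apply, if_pos rfl,
          if_neg (fun hc => hu0 (congrArg (fun e : LaurentExp r s => e.2.2) hc))] at h0
        exact one_ne_zero h0
    · -- main case: P ≠ 0, u not even
      have hfix : ∀ e : LaurentExp r s, LCDaux.sigma u e ≠ e := by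
        intro e h
        have h3 := congrArg (fun e : LaurentExp r s => e.2.2) h
        simp only [LCDaux.sigma] at h3
        exact hw ⟨e.2.2, by rw [two_smul]; exact sub_eq_iff_eq_add.mp h3⟩
      set ψ : LaurentExp r s → Lex (ℕ →₀ ℤ) := LCDaux.lexF r s with hψ
      have hψinj : Function.Injective ψ := LCDaux.lexF_injective
      have hψadd : ∀ a b, ψ (a + b) = ψ a + ψ b := LCDaux.lexF_add
      set pred : LaurentExp r s → Prop := fun e => ψ (LCDaux.sigma u e) < ψ e with hpreddef
      have hψne : ∀ e, ψ (LCDaux.sigma u e) ≠ ψ e := fun e h => hfix e (hψinj h)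
      have hdichot : ∀ e, pred e ↔ ¬ pred (LCDaux.sigma u e) := by
        intro e
        simp only [hpreddef, LCDaux.sigma_sigma]
        constructor
        · intro h h2
          exact absurd (h.trans h2) (lt_irrefl _)
        · intro h
          exact ((hψne e).lt_or_gt).resolve_right h
      set Q : LaurentRing K r s := AddMonoidAlgebra.ofCoeff (P.coeff.filter pred) with hQdef
      have hQapp : ∀ e, Q.coeff e = if pred e then P.coeff e else 0 := fun e => by
        rw [hQdef, AddMonoidAlgebra.coeff_ofCoeff, Finsupp.filter_apply]
      have hsigma_mem : ∀ e, e ∈ P.coeff.support → LCDaux.sigma u e ∈ P.coeff.support := by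
        intro e he
        rw [Finsupp.mem_support_iff] at he ⊢
        intro h0
        exact he (by rw [hrel e, h0, map_zero])
      -- the decomposition
      have hmain : P = Q + zmon K r s u * lconj K hK r s Q := by
        apply AddMonoidAlgebra.ext
        apply Finsupp.ext
        intro e
        rw [AddMonoidAlgebra.coeff_add, Finsupp.add_apply, LCDaux.zmul_lconj_apply' hK, hQapp e, hQapp (LCDaux.sigma u e)]
        by_cases hpe : pred e
        · rw [if_pos hpe, if_neg ((hdichot e).1 hpe), map_zero, add_zero]
        · have hps : pred (LCDaux.sigma u e) := by
            by_contra h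
            exact hpe ((hdichot e).2 h)
          rw [if_neg hpe, if_pos hps, zero_add, ← hrel e]
      refine ⟨Q, hmain, ?_⟩
      rintro ⟨R, hR⟩
      -- pick an element of the support of P with pred
      obtain ⟨e1, he1⟩ := Finsupp.support_nonempty_iff.2 (mt AddMonoidAlgebra.coeff_eq_zero.1 hP0)
      obtain ⟨e0, he0, hpe0⟩ : ∃ e, e ∈ P.coeff.support ∧ pred e := by
        by_cases h : pred e1
        · exact ⟨e1, he1, h⟩
        · exact ⟨LCDaux.sigma u e1, hsigma_mem e1 he1,
            (hdichot (LCDaux.sigma u e1)).2 (by rwa [LCDaux.sigma_sigma])⟩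
      have hQe0 : Q.coeff e0 ≠ 0 := by
        rw [hQapp e0, if_pos hpe0]
        exact Finsupp.mem_support_iff.1 he0
      have hQne : Q ≠ 0 := fun h => hQe0 (by rw [h]; rfl)
      have hRne : R ≠ 0 := by
        rintro rfl
        rw [mul_zero] at hR
        exact hQne hR
      have hQsub : Q.coeff.support ⊆ P.coeff.support := by
        intro e he
        rw [Finsupp.mem_support_iff] at he ⊢
        rw [hQapp e] at he
        intro h0
        rw [h0] at he
        simp at he
      obtain ⟨a, haP, hamax⟩ := P.coeff.support.exists_max_image ψ ⟨e1, he1⟩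
      obtain ⟨a', haP', hamin⟩ := P.coeff.support.exists_min_image ψ ⟨e1, he1⟩
      obtain ⟨b, hbR, hbmax⟩ := R.coeff.support.exists_max_image ψ (Finsupp.support_nonempty_iff.2 (mt AddMonoidAlgebra.coeff_eq_zero.1 hRne))
      obtain ⟨b', hbR', hbmin⟩ := R.coeff.support.exists_min_image ψ (Finsupp.support_nonempty_iff.2 (mt AddMonoidAlgebra.coeff_eq_zero.1 hRne))
      have keymax : (P * R).coeff (a + b) = P.coeff a * R.coeff b := by
        apply LCDaux.mul_apply_unique
        intro x hx y hy hxy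
        have hsum : ψ x + ψ y = ψ a + ψ b := by rw [← hψadd, ← hψadd, hxy]
        have hxa : ψ x = ψ a := by
          by_contra h
          have hlt : ψ x < ψ a := (hamax x hx).lt_of_ne h
          exact absurd hsum (ne_of_lt (add_lt_add_of_lt_of_le hlt (hbmax y hy)))
        have hyb : ψ y = ψ b := by
          rw [hxa] at hsum
          exact add_left_cancel hsum
        exact ⟨hψinj hxa, hψinj hyb⟩
      have keymin : (P * R).coeff (a' + b') = P.coeff a' * R.coeff b' := by
        apply LCDaux.mul_apply_unique
        intro x hx y hy hxy
        have hsum : ψ x + ψ y = ψ a' + ψ b' := by rw [← hψadd, ← hψadd, hxy]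
        have hxa : ψ x = ψ a' := by
          by_contra h
          have hlt : ψ a' < ψ x := (hamin x hx).lt_of_ne (Ne.symm h)
          exact absurd hsum.symm (ne_of_lt (add_lt_add_of_lt_of_le hlt (hbmin y hy)))
        have hyb : ψ y = ψ b' := by
          rw [hxa] at hsum
          exact add_left_cancel hsum
        exact ⟨hψinj hxa, hψinj hyb⟩
      have hne0 : P.coeff a * R.coeff b ≠ 0 :=
        mul_ne_zero (Finsupp.mem_support_iff.1 haP) (Finsupp.mem_support_iff.1 hbR)
      have hne0' : P.coeff a' * R.coeff b' ≠ 0 :=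
        mul_ne_zero (Finsupp.mem_support_iff.1 haP') (Finsupp.mem_support_iff.1 hbR')
      have hab : a + b ∈ P.coeff.support := by
        apply hQsub
        rw [Finsupp.mem_support_iff, hR, keymax]
        exact hne0
      have hab' : a' + b' ∈ P.coeff.support := by
        apply hQsub
        rw [Finsupp.mem_support_iff, hR, keymin]
        exact hne0'
      have hble : ψ b ≤ 0 := by
        have := hamax _ hab
        rw [hψadd] at this
        calc ψ b = -ψ a + (ψ a + ψ b) := by abel
        _ ≤ -ψ a + ψ a := by exact add_le_add_right (by simpa using this) _
        _ = 0 := by abel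
      have hble' : (0 : Lex (ℕ →₀ ℤ)) ≤ ψ b' := by
        have := hamin _ hab'
        rw [hψadd] at this
        calc (0 : Lex (ℕ →₀ ℤ)) = -ψ a' + ψ a' := by abel
        _ ≤ -ψ a' + (ψ a' + ψ b') := add_le_add_right this _
        _ = ψ b' := by abel
      have hRsupp : R.coeff.support ⊆ {0} := by
        intro y hy
        rw [Finset.mem_singleton]
        apply hψinj
        rw [hψ, LCDaux.lexF_zero]
        exact le_antisymm ((hbmax y hy).trans hble) (hble'.trans (hbmin y hy))
      rw [Finsupp.support_subset_singleton] at hRsupp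
      have hc0 : R.coeff 0 ≠ 0 := by
        intro h
        rw [h, Finsupp.single_zero] at hRsupp
        exact hRne (AddMonoidAlgebra.coeff_eq_zero.1 hRsupp)
      -- contradiction at sigma u e0
      have h1 : Q.coeff (LCDaux.sigma u e0) = 0 := by
        rw [hQapp, if_neg ((hdichot e0).1 hpe0)]
      have h2 : Q.coeff (LCDaux.sigma u e0) = P.coeff (LCDaux.sigma u e0) * R.coeff 0 := by
        conv_lhs => rw [hR, show R = AddMonoidAlgebra.single 0 (R.coeff 0) from AddMonoidAlgebra.ext hRsupp]
        exact AddMonoidAlgebra.coeff_mul_single_zero P (R.coeff 0) _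
      rw [h1] at h2
      exact absurd h2.symm
        (mul_ne_zero (Finsupp.mem_support_iff.1 (hsigma_mem e0 he0)) hc0)
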